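/- Let R_{n,θ} (n ∈ ℕ, θ ∈ ℝ) be a one-parameter family of probability distributions on S_n, and let G_n : S_n × ℝ → ℝ be differentiable in its second argument. Fix θ₀ ∈ ℝ and suppose: (i) there exists C < ∞ such that E_{R_{n,θ₀}}[G_n(π,θ₀)²] ≤ C n³ for all n; and (ii) there exists a continuous function λ : ℝ → (0,∞) such that lim_{n→∞} R_{n,θ₀}({π : ∂G_n/∂θ(π,θ) ≤ −n² λ(θ) for all θ ∈ ℝ}) = 1. Then lim_{n→∞} R_{n,θ₀}({π : t ↦ G_n(π,t) has exactly one zero in ℝ}) = 1, and for every ε > 0 there exists M < ∞ such that limsup_{n→∞} R_{n,θ₀}({π : there exists t with G_n(π,t) = 0 and √n |t − θ₀| > M}) ≤ ε. -/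

import Mathlib

open MeasureTheory Filter Topology

noncomputable section

open scoped Classical in
/-- The probability assigned by the distribution with weights `r` on `S_n` to the event
`p`. -/
def Rprob (r : (n : ℕ) → Equiv.Perm (Fin n) → ℝ) (n : ℕ)
    (p : Equiv.Perm (Fin n) → Prop) : ℝ :=
  ∑ π : Equiv.Perm (Fin n), if p π then r n π else 0

open scoped Classical

section helpers

variable {r : (n : ℕ) → Equiv.Perm (Fin n) → ℝ} {n : ℕ}

lemma Rprob_nonneg {p : Equiv.Perm (Fin n) → Prop} (h0 : ∀ π, 0 ≤ r n π) :
    0 ≤ Rprob r n p := by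
  apply Finset.sum_nonneg
  intro π _
  split_ifs
  · exact h0 π
  · exact le_rfl

lemma Rprob_congr {p q : Equiv.Perm (Fin n) → Prop} (h : ∀ π, p π ↔ q π) :
    Rprob r n p = Rprob r n q := by
  apply Finset.sum_congr rfl
  intro π _
  exact if_congr (h π) rfl rfl

lemma Rprob_mono {p q : Equiv.Perm (Fin n) → Prop} (h0 : ∀ π, 0 ≤ r n π)
    (h : ∀ π, p π → q π) : Rprob r n p ≤ Rprob r n q := by
  apply Finset.sum_le_sum
  intro π _
  split_ifs with h1 h2
  · exact le_rfl
  · exact absurd (h π h1) h2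
  · exact h0 π
  · exact le_rfl

lemma Rprob_le_one {p : Equiv.Perm (Fin n) → Prop} (h0 : ∀ π, 0 ≤ r n π)
    (h1 : ∑ π : Equiv.Perm (Fin n), r n π = 1) : Rprob r n p ≤ 1 := by
  rw [← h1]
  apply Finset.sum_le_sum
  intro π _
  split_ifs
  · exact le_rfl
  · exact h0 π

lemma Rprob_not {p : Equiv.Perm (Fin n) → Prop}
    (h1 : ∑ π : Equiv.Perm (Fin n), r n π = 1) :
    Rprob r n (fun π => ¬ p π) = 1 - Rprob r n p := by
  rw [eq_sub_iff_add_eq, ← h1, Rprob, Rprob, ← Finset.sum_add_distrib]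
  apply Finset.sum_congr rfl
  intro π _
  by_cases h : p π <;> simp [h]

lemma Rprob_or (h0 : ∀ π, 0 ≤ r n π) {p q : Equiv.Perm (Fin n) → Prop} :
    Rprob r n (fun π => p π ∨ q π) ≤ Rprob r n p + Rprob r n q := by
  rw [Rprob, Rprob, Rprob, ← Finset.sum_add_distrib]
  apply Finset.sum_le_sum
  intro π _
  split_ifs <;> first | linarith [h0 π] | tauto

lemma Rprob_inter_ge (h0 : ∀ π, 0 ≤ r n π) {p q : Equiv.Perm (Fin n) → Prop} :
    Rprob r n p - Rprob r n (fun π => ¬ q π) ≤ Rprob r n (fun π => p π ∧ q π) := by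
  rw [sub_le_iff_le_add, Rprob, Rprob, Rprob, ← Finset.sum_add_distrib]
  apply Finset.sum_le_sum
  intro π _
  split_ifs <;> first | linarith [h0 π] | tauto

lemma Rprob_cheb (h0 : ∀ π, 0 ≤ r n π) (f : Equiv.Perm (Fin n) → ℝ) {a : ℝ} (ha : 0 < a) :
    Rprob r n (fun π => a ≤ |f π|) ≤ (∑ π : Equiv.Perm (Fin n), r n π * f π ^ 2) / a ^ 2 := by
  rw [le_div_iff₀ (by positivity), Rprob, Finset.sum_mul]
  apply Finset.sum_le_sum
  intro π _
  split_ifs with h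
  · have h2 : a ^ 2 ≤ f π ^ 2 := by
      have := abs_nonneg (f π)
      nlinarith [sq_abs (f π)]
    nlinarith [h0 π]
  · simpa using mul_nonneg (h0 π) (sq_nonneg (f π))

/-- Deterministic root lemma. -/
lemma root_lemma {g lam : ℝ → ℝ} (hg : Differentiable ℝ g)
    (hlampos : ∀ t, 0 < lam t) {K c θ₀ : ℝ} (hK : 0 < K) (hc : 0 < c)
    (hclam : ∀ t ∈ Set.Icc (θ₀ - 1) (θ₀ + 1), c ≤ lam t)
    (hderiv : ∀ t, deriv g t ≤ -K * lam t)
    (hsmall : |g θ₀| < K * c) :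
    (∃! t : ℝ, g t = 0) ∧ ∀ t : ℝ, g t = 0 → K * c * |t - θ₀| ≤ |g θ₀| := by
  have hanti : StrictAnti g := strictAnti_of_deriv_neg fun t =>
    lt_of_le_of_lt (hderiv t) (by nlinarith [hlampos t])
  set h : ℝ → ℝ := fun t => g t + K * c * t with hh
  have hdiffh : Differentiable ℝ h := hg.add ((differentiable_const _).mul differentiable_id)
  have hderivh : ∀ t, deriv h t = deriv g t + K * c := by
    intro t
    have h1 : HasDerivAt (fun t : ℝ => K * c * t) (K * c) t := by
      simpa using (hasDerivAt_id t).const_mul (K * c)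
    exact ((hg t).hasDerivAt.add h1).deriv
  have hmono : AntitoneOn h (Set.Icc (θ₀ - 1) (θ₀ + 1)) := by
    apply antitoneOn_of_deriv_nonpos (convex_Icc _ _) hdiffh.continuous.continuousOn
      hdiffh.differentiableOn
    intro t ht
    rw [hderivh]
    have h1 := hderiv t
    have h2 := hclam t (interior_subset ht)
    nlinarith
  have hmem0 : θ₀ ∈ Set.Icc (θ₀ - 1) (θ₀ + 1) := by constructor <;> linarith
  have hmemp : θ₀ + 1 ∈ Set.Icc (θ₀ - 1) (θ₀ + 1) := by constructor <;> linarith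
  have hmemm : θ₀ - 1 ∈ Set.Icc (θ₀ - 1) (θ₀ + 1) := by constructor <;> linarith
  have habs := abs_lt.mp hsmall
  have hplus : g (θ₀ + 1) < 0 := by
    have := hmono hmem0 hmemp (by linarith)
    simp only [hh] at this
    linarith
  have hminus : 0 < g (θ₀ - 1) := by
    have := hmono hmemm hmem0 (by linarith)
    simp only [hh] at this
    linarith
  have hivt : (0 : ℝ) ∈ Set.Icc (g (θ₀ + 1)) (g (θ₀ - 1)) := ⟨hplus.le, hminus.le⟩
  obtain ⟨t0, ht0mem, ht0⟩ := intermediate_value_Icc' (by linarith : θ₀ - 1 ≤ θ₀ + 1)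
    hg.continuous.continuousOn hivt
  refine ⟨⟨t0, ht0, fun y hy => hanti.injective (by rw [hy, ht0])⟩, ?_⟩
  intro t ht
  have htlo : θ₀ - 1 ≤ t := by
    by_contra hcon
    push_neg at hcon
    have := hanti hcon
    rw [ht] at this
    linarith
  have hthi : t ≤ θ₀ + 1 := by
    by_contra hcon
    push_neg at hcon
    have := hanti hcon
    rw [ht] at this
    linarith
  have htmem : t ∈ Set.Icc (θ₀ - 1) (θ₀ + 1) := ⟨htlo, hthi⟩
  rcases le_total θ₀ t with hle | hle
  · have := hmono hmem0 htmem hle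
    simp only [hh] at this
    rw [ht] at this
    rw [abs_of_nonneg (by linarith : (0:ℝ) ≤ t - θ₀)]
    have := le_abs_self (g θ₀)
    nlinarith
  · have := hmono htmem hmem0 hle
    simp only [hh] at this
    rw [ht] at this
    rw [abs_of_nonpos (by linarith : t - θ₀ ≤ 0)]
    have := neg_abs_le (g θ₀)
    nlinarith

end helpers

/-- A general lemma producing `√n`-consistent estimators: if the
estimating function `G_n` satisfies a second-moment bound `E[G_n(π,θ₀)²] ≤ C n³` and its
`θ`-derivative is uniformly bounded above by `−n² λ(θ)` with probability tending to one,
then `G_n(π,·) = 0` has a unique root with probability tending to one, and the root is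
`√n`-consistent for `θ₀`. -/
theorem general_sqrt_n_consistency
    (r : (n : ℕ) → Equiv.Perm (Fin n) → ℝ)
    (hr : ∀ n : ℕ, (∀ π, 0 ≤ r n π) ∧ ∑ π : Equiv.Perm (Fin n), r n π = 1)
    (G : (n : ℕ) → Equiv.Perm (Fin n) → ℝ → ℝ)
    (hG : ∀ (n : ℕ) (π : Equiv.Perm (Fin n)), Differentiable ℝ (G n π))
    (θ₀ : ℝ)
    (hC : ∃ C : ℝ, ∀ n : ℕ,
      ∑ π : Equiv.Perm (Fin n), r n π * (G n π θ₀) ^ 2 ≤ C * (n : ℝ) ^ 3)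
    (hlam : ∃ lam : ℝ → ℝ, Continuous lam ∧ (∀ t, 0 < lam t) ∧
      Tendsto (fun n : ℕ => Rprob r n
          (fun π => ∀ t : ℝ, deriv (G n π) t ≤ -(n : ℝ) ^ 2 * lam t))
        atTop (𝓝 1)) :
    Tendsto (fun n : ℕ => Rprob r n (fun π => ∃! t : ℝ, G n π t = 0)) atTop (𝓝 1) ∧
    ∀ ε > 0, ∃ M : ℝ,
      Filter.limsup
        (fun n : ℕ => Rprob r n
          (fun π => ∃ t : ℝ, G n π t = 0 ∧ M < Real.sqrt n * |t - θ₀|))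
        atTop ≤ ε := by
  obtain ⟨C, hC⟩ := hC
  obtain ⟨lam, hlamc, hlamp, hlamt⟩ := hlam
  -- minimum of lam on [θ₀-1, θ₀+1]
  obtain ⟨x, hxmem, hxmin⟩ := (isCompact_Icc : IsCompact (Set.Icc (θ₀ - 1) (θ₀ + 1))).exists_isMinOn
    ⟨θ₀, by constructor <;> linarith⟩ hlamc.continuousOn
  set c : ℝ := lam x with hcdef
  have hc : 0 < c := hlamp x
  have hclam : ∀ t ∈ Set.Icc (θ₀ - 1) (θ₀ + 1), c ≤ lam t := hxmin
  set A : (n : ℕ) → Equiv.Perm (Fin n) → Prop :=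
    fun n π => ∀ t : ℝ, deriv (G n π) t ≤ -(n : ℝ) ^ 2 * lam t with hA
  -- Chebyshev consequence
  have cheb : ∀ n : ℕ, ∀ a : ℝ, 0 < a →
      Rprob r n (fun π => a ≤ |G n π θ₀|) ≤ C * (n : ℝ) ^ 3 / a ^ 2 := by
    intro n a ha
    refine (Rprob_cheb (hr n).1 (fun π => G n π θ₀) ha).trans ?_
    exact (div_le_div_iff_of_pos_right (by positivity : (0:ℝ) < a ^ 2)).mpr (hC n)
  constructor
  · -- Part 1
    have key1 : ∀ n : ℕ, 1 ≤ n →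
        Rprob r n (A n) - (C / c ^ 2) / (n : ℝ) ≤
        Rprob r n (fun π => ∃! t : ℝ, G n π t = 0) := by
      intro n hn
      have hn' : (1 : ℝ) ≤ (n : ℝ) := by exact_mod_cast hn
      have hKpos : (0 : ℝ) < (n : ℝ) ^ 2 := by positivity
      have hapos : (0 : ℝ) < (n : ℝ) ^ 2 * c := by positivity
      have hch := cheb n ((n : ℝ) ^ 2 * c) hapos
      have hbnd : C * (n : ℝ) ^ 3 / ((n : ℝ) ^ 2 * c) ^ 2 = (C / c ^ 2) / (n : ℝ) := by
        field_simp
      rw [hbnd] at hch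
      have hsub : Rprob r n (A n) - (C / c ^ 2) / (n : ℝ) ≤
          Rprob r n (fun π => A n π ∧ |G n π θ₀| < (n : ℝ) ^ 2 * c) := by
        have := Rprob_inter_ge (r := r) (n := n) (hr n).1
          (p := A n) (q := fun π => |G n π θ₀| < (n : ℝ) ^ 2 * c)
        have hcg : Rprob r n (fun π => ¬ |G n π θ₀| < (n : ℝ) ^ 2 * c) =
            Rprob r n (fun π => (n : ℝ) ^ 2 * c ≤ |G n π θ₀|) :=
          Rprob_congr fun π => not_lt
        rw [hcg] at this
        linarith
      refine hsub.trans (Rprob_mono (hr n).1 ?_)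
      rintro π ⟨hAπ, hsmall⟩
      exact (root_lemma (hG n π) hlamp hKpos hc hclam hAπ hsmall).1
    have T0 : Tendsto (fun n : ℕ => (C / c ^ 2) / (n : ℝ)) atTop (𝓝 0) :=
      tendsto_const_div_atTop_nhds_zero_nat _
    have hlow : Tendsto (fun n : ℕ => Rprob r n (A n) - (C / c ^ 2) / (n : ℝ))
        atTop (𝓝 1) := by
      simpa only [sub_zero] using hlamt.sub T0
    refine tendsto_of_tendsto_of_tendsto_of_le_of_le' hlow tendsto_const_nhds ?_ ?_
    · filter_upwards [eventually_ge_atTop 1] with n hn using key1 n hn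
    · filter_upwards with n using Rprob_le_one (hr n).1 (hr n).2
  · -- Part 2
    intro ε hε
    set K : ℝ := max 1 (Real.sqrt (C / ε)) with hKdef
    have hK1 : (1 : ℝ) ≤ K := le_max_left _ _
    have hKpos : (0 : ℝ) < K := by linarith
    have hCK : C / K ^ 2 ≤ ε := by
      rw [div_le_iff₀ (by positivity : (0:ℝ) < K ^ 2)]
      rcases le_or_gt C 0 with hc0 | hc0
      · nlinarith
      · have h2 : (0 : ℝ) ≤ C / ε := by positivity
        have h1 : Real.sqrt (C / ε) ≤ K := le_max_right _ _
        have hsq : C / ε ≤ K ^ 2 := by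
          nlinarith [Real.sq_sqrt h2, Real.sqrt_nonneg (C / ε)]
        have hCe : C = (C / ε) * ε := by field_simp
        rw [hCe]
        nlinarith
    refine ⟨K / c, ?_⟩
    set u : ℕ → ℝ := fun n => Rprob r n
      (fun π => ∃ t : ℝ, G n π t = 0 ∧ K / c < Real.sqrt n * |t - θ₀|) with hu
    set v : ℕ → ℝ := fun n => (1 - Rprob r n (A n)) + C / K ^ 2 with hv
    have hvt : Tendsto v atTop (𝓝 (C / K ^ 2)) := by
      have : Tendsto (fun n : ℕ => (1 - Rprob r n (A n))) atTop (𝓝 0) := by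
        simpa only [sub_self] using (tendsto_const_nhds (x := (1:ℝ)) (f := atTop)).sub hlamt
      simpa only [zero_add] using this.add (tendsto_const_nhds (x := C / K ^ 2))
    have huv : ∀ᶠ n in atTop, u n ≤ v n := by
      filter_upwards [eventually_ge_atTop 1, eventually_gt_atTop (⌈(K / c) ^ 2⌉₊)] with n hn hn2
      have hn' : (1 : ℝ) ≤ (n : ℝ) := by exact_mod_cast hn
      have hnKc : (K / c) ^ 2 < (n : ℝ) := lt_of_le_of_lt (Nat.le_ceil _) (by exact_mod_cast hn2)
      set s : ℝ := Real.sqrt n with hs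
      have hs2 : s * s = (n : ℝ) := Real.mul_self_sqrt (by positivity)
      have hs1 : (1 : ℝ) ≤ s := by
        nlinarith [Real.sqrt_nonneg (n : ℝ)]
      have hKcs : K / c < s := by
        nlinarith [Real.sqrt_nonneg (n : ℝ), div_pos hKpos hc]
      have hKs : K * (n : ℝ) * s < (n : ℝ) ^ 2 * c := by
        have h1 : K < c * s := by
          rw [div_lt_iff₀ hc] at hKcs
          linarith [mul_comm s c]
        have hns : (0:ℝ) < (n:ℝ) * s := by nlinarith
        calc K * (n:ℝ) * s = K * ((n:ℝ) * s) := by ring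
          _ < (c * s) * ((n:ℝ) * s) := mul_lt_mul_of_pos_right h1 hns
          _ = c * (n:ℝ) * (s * s) := by ring
          _ = c * (n:ℝ) * (n:ℝ) := by rw [hs2]
          _ = (n:ℝ) ^ 2 * c := by ring
      have hsubset : ∀ π : Equiv.Perm (Fin n),
          (∃ t : ℝ, G n π t = 0 ∧ K / c < Real.sqrt n * |t - θ₀|) →
          (¬ A n π) ∨ (K * (n : ℝ) * s ≤ |G n π θ₀|) := by
        intro π hbad
        by_contra hcon
        push_neg at hcon
        obtain ⟨hAπ, hGsmall⟩ := hcon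
        obtain ⟨t, ht, htfar⟩ := hbad
        have hKpos2 : (0 : ℝ) < (n : ℝ) ^ 2 := by positivity
        have hsmall : |G n π θ₀| < (n : ℝ) ^ 2 * c := lt_trans hGsmall hKs
        have hroot := (root_lemma (hG n π) hlamp hKpos2 hc hclam hAπ hsmall).2 t ht
        -- n² c |t - θ₀| ≤ |G θ₀| < K n s, but K/c < s |t-θ₀| gives contradiction
        rw [← hs] at htfar
        have habs : 0 ≤ |t - θ₀| := abs_nonneg _
        have h2 : K * (n : ℝ) * s < (n : ℝ) ^ 2 * c * |t - θ₀| := by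
          have h3 : K < c * (s * |t - θ₀|) := by
            rw [div_lt_iff₀ hc] at htfar
            nlinarith
          have hn2 : (n : ℝ) ^ 2 = (n:ℝ) * (s * s) := by rw [hs2]; ring
          rw [hn2]
          nlinarith [mul_pos (lt_of_lt_of_le zero_lt_one hn') (lt_of_lt_of_le zero_lt_one hs1)]
        linarith
      have step1 : u n ≤ Rprob r n (fun π => (¬ A n π) ∨ (K * (n : ℝ) * s ≤ |G n π θ₀|)) :=
        Rprob_mono (hr n).1 hsubset
      have step2 : Rprob r n (fun π => (¬ A n π) ∨ (K * (n : ℝ) * s ≤ |G n π θ₀|)) ≤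
          Rprob r n (fun π => ¬ A n π) + Rprob r n (fun π => K * (n : ℝ) * s ≤ |G n π θ₀|) :=
        Rprob_or (hr n).1
      have step3 : Rprob r n (fun π => ¬ A n π) = 1 - Rprob r n (A n) := Rprob_not (hr n).2
      have hapos : (0 : ℝ) < K * (n : ℝ) * s := by positivity
      have step4 : Rprob r n (fun π => K * (n : ℝ) * s ≤ |G n π θ₀|) ≤ C / K ^ 2 := by
        have := cheb n (K * (n : ℝ) * s) hapos
        have heq : C * (n : ℝ) ^ 3 / (K * (n : ℝ) * s) ^ 2 = C / K ^ 2 := by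
          have hs2' : s ^ 2 = (n : ℝ) := by rw [sq]; exact hs2
          have hsq : (K * (n:ℝ) * s) ^ 2 = (n:ℝ) ^ 3 * K ^ 2 := by
            calc (K * (n:ℝ) * s) ^ 2 = K ^ 2 * (n:ℝ) ^ 2 * s ^ 2 := by ring
              _ = K ^ 2 * (n:ℝ) ^ 2 * (n:ℝ) := by rw [hs2']
              _ = (n:ℝ) ^ 3 * K ^ 2 := by ring
          rw [hsq, mul_comm C ((n:ℝ) ^ 3),
            mul_div_mul_left _ _ (by positivity : (0:ℝ) < (n:ℝ) ^ 3).ne']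
        rw [heq] at this
        exact this
      calc u n ≤ _ := step1
        _ ≤ _ := step2
        _ ≤ v n := by rw [step3, hv]; simp only []; linarith
    have hub : IsCoboundedUnder (· ≤ ·) atTop u :=
      isCoboundedUnder_le_of_eventually_le atTop
        (Eventually.of_forall fun n => Rprob_nonneg (hr n).1)
    calc Filter.limsup u atTop ≤ Filter.limsup v atTop :=
          limsup_le_limsup huv hub hvt.isBoundedUnder_le
      _ = C / K ^ 2 := hvt.limsup_eq
      _ ≤ ε := hCK
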